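/- The function d(⟨α,f⟩, ⟨β,g⟩) = α + β − 2·min{α, β, c(f,g)} is well-defined on equivalence classes: if (α,f) ∼ (γ,u) and (β,g) ∼ (δ,v) then min{α, β, c(f,g)} = min{γ, δ, c(u,v)}. -/

import Mathlib

private lemma aux_key {Λ : Type*} [AddCommGroup Λ] [LinearOrder Λ] [IsOrderedAddMonoid Λ]
    {G : Type*} (c : G → G → Λ)
    (csymm : ∀ x y, c x y = c y x)
    (hL3 : ∀ x y z, c x z < c x y → c x z = c y z)
    {m : Λ} {f g u v : G} (hfu : m ≤ c f u) (hgv : m ≤ c g v)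
    (h : c f g < m) : c u v = c f g := by
  have e1 : c f g = c u g := hL3 f u g (lt_of_lt_of_le h hfu)
  have h2 : c g u < c g v := by
    rw [csymm g u, ← e1]; exact lt_of_lt_of_le h hgv
  have e2 : c g u = c v u := hL3 g v u h2
  rw [csymm u v, ← e2, csymm g u, ← e1]

/-- The function `d(⟨α,f⟩, ⟨β,g⟩) = α + β − 2·min{α, β, c(f,g)}` is
well-defined on equivalence classes: if `(α,f) ∼ (γ,u)` and `(β,g) ∼ (δ,v)` then
`min{α, β, c(f,g)} = min{γ, δ, c(u,v)}`. -/
theorem universal_tree_metric_well_defined {Λ : Type*} [AddCommGroup Λ] [LinearOrder Λ] [IsOrderedAddMonoid Λ]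
    {G : Type*} [Group G] (l : G → Λ) (c : G → G → Λ)
    (hc : ∀ x y, 2 • c x y = l x + l y - l (x⁻¹ * y))
    (hL1 : ∀ x, 0 ≤ l x) (hL1' : l 1 = 0)
    (hL2 : ∀ x, l x⁻¹ = l x)
    (hL3 : ∀ x y z, c x z < c x y → c x z = c y z) :
    ∀ (α β γ δ : Λ) (f g u v : G),
      0 ≤ α → α ≤ l f → 0 ≤ β → β ≤ l g →
      0 ≤ γ → γ ≤ l u → 0 ≤ δ → δ ≤ l v →
      α = γ → α ≤ c f u → β = δ → β ≤ c g v →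
      min α (min β (c f g)) = min γ (min δ (c u v)) := by
  have csymm : ∀ x y, c x y = c y x := by
    intro x y
    have h1 := hc x y
    have h2 := hc y x
    have hl : l (x⁻¹ * y) = l (y⁻¹ * x) := by
      rw [← hL2 (x⁻¹ * y), mul_inv_rev, inv_inv]
    rw [two_nsmul] at h1 h2
    have : c x y + c x y = c y x + c y x := by
      rw [h1, h2, hl]; abel
    rcases lt_trichotomy (c x y) (c y x) with h | h | h
    · exact absurd this (add_lt_add h h).ne
    · exact h
    · exact absurd this.symm (add_lt_add h h).ne
  intro α β γ δ f g u v _ _ _ _ _ _ _ _ hαγ hfu hβδ hgv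
  subst hαγ; subst hβδ
  have hfu' : min α β ≤ c f u := le_trans (min_le_left _ _) hfu
  have hgv' : min α β ≤ c g v := le_trans (min_le_right _ _) hgv
  rw [← min_assoc α β (c f g), ← min_assoc α β (c u v)]
  rcases lt_or_ge (c f g) (min α β) with h | h
  · rw [aux_key c csymm hL3 hfu' hgv' h]
  rcases lt_or_ge (c u v) (min α β) with h' | h'
  · have := aux_key c csymm hL3 (by rw [csymm u f]; exact hfu')
      (by rw [csymm v g]; exact hgv') h'
    rw [this]
  · rw [min_eq_left h, min_eq_left h']
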